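/- Let Q be the thin category of a finite linear order and let W ⊆ Mor(Q) satisfy the 2-out-of-6 property. If f ∈ Mor(Q) is sent to an isomorphism by the localization functor Q → Q[W⁻¹], then f ∈ W. -/

import Mathlib

open CategoryTheory

/-- A class of morphisms satisfies the 2-out-of-6 property if it contains all identities
and whenever `g ∘ f ∈ W` and `h ∘ g ∈ W` for a composable triple, then
`f, g, h, h ∘ g ∘ f ∈ W`. -/
def TwoOutOfSix {C : Type*} [Category C] (W : MorphismProperty C) : Prop :=
  (∀ X : C, W (𝟙 X)) ∧
  ∀ ⦃a b c d : C⦄ (f : a ⟶ b) (g : b ⟶ c) (h : c ⟶ d),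
    W (f ≫ g) → W (g ≫ h) → W f ∧ W g ∧ W h ∧ W (f ≫ g ≫ h)

/-- The 2-out-of-6 closure of a class of morphisms: the smallest class containing `W`
and all identities which satisfies the 2-out-of-6 property. -/
inductive Closure {C : Type*} [Category C] (W : MorphismProperty C) :
    ∀ ⦃X Y : C⦄, (X ⟶ Y) → Prop
  | of {X Y : C} (f : X ⟶ Y) : W f → Closure W f
  | id (X : C) : Closure W (𝟙 X)
  | left {a b c d : C} (f : a ⟶ b) (g : b ⟶ c) (h : c ⟶ d) :
      Closure W (f ≫ g) → Closure W (g ≫ h) → Closure W f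
  | mid {a b c d : C} (f : a ⟶ b) (g : b ⟶ c) (h : c ⟶ d) :
      Closure W (f ≫ g) → Closure W (g ≫ h) → Closure W g
  | right {a b c d : C} (f : a ⟶ b) (g : b ⟶ c) (h : c ⟶ d) :
      Closure W (f ≫ g) → Closure W (g ≫ h) → Closure W h
  | comp {a b c d : C} (f : a ⟶ b) (g : b ⟶ c) (h : c ⟶ d) :
      Closure W (f ≫ g) → Closure W (g ≫ h) → Closure W (f ≫ g ≫ h)

/-- The 2-out-of-6 closure, as a `MorphismProperty`. -/
def tosClosure {C : Type*} [Category C] (W : MorphismProperty C) : MorphismProperty C :=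
  fun _ _ f => Closure W f

namespace Tos

variable {n : ℕ} (W : MorphismProperty (Fin n))

/-- `Rel W a b` : `a ≤ b` and the unique morphism `a ⟶ b` lies in `W`. -/
def Rel (a b : Fin n) : Prop := ∃ h : a ≤ b, W (homOfLE h)

/-- Symmetrization of `Rel`. -/
def ERel (a b : Fin n) : Prop := Rel W a b ∨ Rel W b a

variable {W}

lemma key26 (hW : TwoOutOfSix W) {a b c d : Fin n} (hab : a ≤ b) (hbc : b ≤ c) (hcd : c ≤ d)
    (h1 : W (homOfLE (hab.trans hbc))) (h2 : W (homOfLE (hbc.trans hcd))) :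
    W (homOfLE hab) ∧ W (homOfLE hbc) ∧ W (homOfLE hcd) ∧
      W (homOfLE ((hab.trans hbc).trans hcd)) := by
  obtain ⟨w1, w2, w3, w4⟩ := hW.2 (homOfLE hab) (homOfLE hbc) (homOfLE hcd)
    (by rw [homOfLE_comp]; exact h1) (by rw [homOfLE_comp]; exact h2)
  refine ⟨w1, w2, w3, ?_⟩
  rw [homOfLE_comp, homOfLE_comp] at w4
  exact w4

lemma rel_refl (hW : TwoOutOfSix W) (a : Fin n) : Rel W a a :=
  ⟨le_rfl, by rw [Subsingleton.elim (homOfLE (le_refl a)) (𝟙 a)]; exact hW.1 a⟩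

lemma rel_merge (hW : TwoOutOfSix W) {a b c d : Fin n} (hab : a ≤ b) (hbc : b ≤ c) (hcd : c ≤ d)
    (h1 : Rel W a c) (h2 : Rel W b d) :
    Rel W a b ∧ Rel W b c ∧ Rel W c d ∧ Rel W a d := by
  obtain ⟨_, w1⟩ := h1
  obtain ⟨_, w2⟩ := h2
  obtain ⟨u1, u2, u3, u4⟩ := key26 hW hab hbc hcd w1 w2
  exact ⟨⟨hab, u1⟩, ⟨hbc, u2⟩, ⟨hcd, u3⟩, ⟨(hab.trans hbc).trans hcd, u4⟩⟩

lemma rel_comp (hW : TwoOutOfSix W) {a b c : Fin n} (h1 : Rel W a b) (h2 : Rel W b c) :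
    Rel W a c :=
  (rel_merge hW h1.choose (le_refl b) h2.choose h1 h2).2.2.2

lemma rel_left (hW : TwoOutOfSix W) {x y z : Fin n} (hxy : x ≤ y) (h1 : Rel W x z)
    (h2 : Rel W y z) : Rel W x y :=
  (rel_merge hW hxy h2.choose (le_refl z) h1 h2).1

lemma rel_right (hW : TwoOutOfSix W) {x y z : Fin n} (hyz : y ≤ z) (h1 : Rel W x y)
    (h2 : Rel W x z) : Rel W y z :=
  (rel_merge hW (le_refl x) h1.choose hyz h1 h2).2.2.1

lemma erel_refl (hW : TwoOutOfSix W) (a : Fin n) : ERel W a a := Or.inl (rel_refl hW a)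

lemma erel_symm {a b : Fin n} (h : ERel W a b) : ERel W b a := h.symm

lemma erel_trans (hW : TwoOutOfSix W) {a b c : Fin n} (h1 : ERel W a b) (h2 : ERel W b c) :
    ERel W a c := by
  rcases h1 with h1 | h1 <;> rcases h2 with h2 | h2
  · exact Or.inl (rel_comp hW h1 h2)
  · rcases le_total a c with h | h
    · exact Or.inl (rel_left hW h h1 h2)
    · exact Or.inr (rel_left hW h h2 h1)
  · rcases le_total a c with h | h
    · exact Or.inl (rel_right hW h h1 h2)
    · exact Or.inr (rel_right hW h h2 h1)
  · exact Or.inr (rel_comp hW h2 h1)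

variable (W)

/-- The equivalence class of `t`, as a `Finset`. -/
noncomputable def cls (t : Fin n) : Finset (Fin n) :=
  letI := Classical.decPred (fun s => ERel W t s)
  insert t (Finset.univ.filter (fun s => ERel W t s))

lemma self_mem_cls (t : Fin n) : t ∈ cls W t := Finset.mem_insert_self _ _

variable {W}

lemma mem_cls (hW : TwoOutOfSix W) {t s : Fin n} : s ∈ cls W t ↔ ERel W t s := by
  classical
  simp only [cls, Finset.mem_insert, Finset.mem_filter, Finset.mem_univ, true_and]
  constructor
  · rintro (rfl | h)
    · exact erel_refl hW _
    · exact h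
  · intro h
    exact Or.inr h

variable (W)

noncomputable def mincl (t : Fin n) : Fin n := (cls W t).min' ⟨t, self_mem_cls W t⟩

noncomputable def maxcl (t : Fin n) : Fin n := (cls W t).max' ⟨t, self_mem_cls W t⟩

lemma mincl_le (t : Fin n) : mincl W t ≤ t := Finset.min'_le _ _ (self_mem_cls W t)

lemma le_maxcl (t : Fin n) : t ≤ maxcl W t := Finset.le_max' _ _ (self_mem_cls W t)

variable {W}

lemma mincl_mem (hW : TwoOutOfSix W) (t : Fin n) : ERel W t (mincl W t) :=
  (mem_cls hW).1 (Finset.min'_mem _ _)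

lemma maxcl_mem (hW : TwoOutOfSix W) (t : Fin n) : ERel W t (maxcl W t) :=
  (mem_cls hW).1 (Finset.max'_mem _ _)

lemma mincl_le_of (hW : TwoOutOfSix W) {t s : Fin n} (h : ERel W t s) : mincl W t ≤ s :=
  Finset.min'_le _ _ ((mem_cls hW).2 h)

lemma le_maxcl_of (hW : TwoOutOfSix W) {t s : Fin n} (h : ERel W t s) : s ≤ maxcl W t :=
  Finset.le_max' _ _ ((mem_cls hW).2 h)

lemma mincl_eq (hW : TwoOutOfSix W) {t u : Fin n} (h : ERel W t u) : mincl W t = mincl W u :=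
  le_antisymm (mincl_le_of hW (erel_trans hW h (mincl_mem hW u)))
    (mincl_le_of hW (erel_trans hW (erel_symm h) (mincl_mem hW t)))

lemma maxcl_eq (hW : TwoOutOfSix W) {t u : Fin n} (h : ERel W t u) : maxcl W t = maxcl W u :=
  le_antisymm (le_maxcl_of hW (erel_trans hW (erel_symm h) (maxcl_mem hW t)))
    (le_maxcl_of hW (erel_trans hW h (maxcl_mem hW u)))

variable (W)

/-- Height function used to build a functor to `Type` detecting `W`. -/
noncomputable def psi (t : Fin n) : ℤ :=
  (n : ℤ) * (((maxcl W t : Fin n) : ℤ) - ((mincl W t : Fin n) : ℤ)) - ((mincl W t : Fin n) : ℤ)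

variable {W}

lemma psi_eq (hW : TwoOutOfSix W) {t u : Fin n} (h : ERel W t u) : psi W t = psi W u := by
  rw [psi, psi, mincl_eq hW h, maxcl_eq hW h]

lemma psi_inj (hW : TwoOutOfSix W) {t u : Fin n} (h : psi W t = psi W u) : ERel W t u := by
  have hmt : ((mincl W t : Fin n) : ℤ) < (n : ℤ) := by exact_mod_cast (mincl W t).isLt
  have hmu : ((mincl W u : Fin n) : ℤ) < (n : ℤ) := by exact_mod_cast (mincl W u).isLt
  have hmt0 : (0 : ℤ) ≤ ((mincl W t : Fin n) : ℤ) := by positivity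
  have hmu0 : (0 : ℤ) ≤ ((mincl W u : Fin n) : ℤ) := by positivity
  set lt := ((maxcl W t : Fin n) : ℤ) - ((mincl W t : Fin n) : ℤ) with hlt
  set lu := ((maxcl W u : Fin n) : ℤ) - ((mincl W u : Fin n) : ℤ) with hlu
  have hcases : lt = lu := by
    rcases lt_trichotomy lt lu with hc | hc | hc
    · exfalso
      have : (n : ℤ) * (lt + 1) ≤ (n : ℤ) * lu := by
        apply mul_le_mul_of_nonneg_left (by linarith) (by positivity)
      rw [psi, psi] at h
      nlinarith
    · exact hc
    · exfalso
      have : (n : ℤ) * (lu + 1) ≤ (n : ℤ) * lt := by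
        apply mul_le_mul_of_nonneg_left (by linarith) (by positivity)
      rw [psi, psi] at h
      nlinarith
  have hmm : ((mincl W t : Fin n) : ℤ) = ((mincl W u : Fin n) : ℤ) := by
    rw [psi, psi, ← hlt, ← hlu, hcases] at h
    linarith
  have : mincl W t = mincl W u := by
    apply Fin.ext
    exact_mod_cast hmm
  exact erel_trans hW (mincl_mem hW t) (this ▸ erel_symm (mincl_mem hW u))

/-- The key "nesting" estimate: if `Rel W u v` and `u ≤ t ≤ v` then `psi t ≤ psi u`. -/
lemma nest (hW : TwoOutOfSix W) {u v t : Fin n} (huv : Rel W u v) (h1 : u ≤ t) (h2 : t ≤ v) :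
    psi W t ≤ psi W u := by
  by_cases hE : ERel W u t
  · exact le_of_eq (psi_eq hW (erel_symm hE))
  · -- `u ≤ mincl t`
    have hmt : u ≤ mincl W t := by
      by_contra hlt
      push_neg at hlt
      have hsle : mincl W t ≤ t := mincl_le W t
      have hrel : Rel W (mincl W t) t := by
        rcases mincl_mem hW t with h | h
        · obtain ⟨hh, _⟩ := h
          exact absurd ((hlt.trans_le h1).trans_le hh) (lt_irrefl _)
        · exact h
      have := rel_merge hW (le_of_lt hlt) h1 h2 hrel huv
      exact hE (Or.inl this.2.1)
    have hMt : maxcl W t ≤ v := by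
      by_contra hlt
      push_neg at hlt
      have hsge : t ≤ maxcl W t := le_maxcl W t
      have hrel : Rel W t (maxcl W t) := by
        rcases maxcl_mem hW t with h | h
        · exact h
        · obtain ⟨hh, _⟩ := h
          exact absurd (hh.trans_lt ((h2.trans_lt hlt))) (lt_irrefl _)
      have := rel_merge hW h1 h2 (le_of_lt hlt) huv hrel
      exact hE (Or.inl this.1)
    have hne : mincl W t ≠ u := by
      intro h
      exact hE (erel_symm (h ▸ mincl_mem hW t))
    -- numerics
    have hminu : mincl W u ≤ u := mincl_le W u
    have hmaxu : v ≤ maxcl W u := le_maxcl_of hW (Or.inl huv)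
    have c1 : ((u : Fin n) : ℤ) < ((mincl W t : Fin n) : ℤ) := by
      have : u < mincl W t := lt_of_le_of_ne hmt (Ne.symm hne)
      exact_mod_cast this
    have c2 : ((maxcl W t : Fin n) : ℤ) ≤ ((v : Fin n) : ℤ) := by exact_mod_cast hMt
    have c3 : ((mincl W u : Fin n) : ℤ) ≤ ((u : Fin n) : ℤ) := by exact_mod_cast hminu
    have c4 : ((v : Fin n) : ℤ) ≤ ((maxcl W u : Fin n) : ℤ) := by exact_mod_cast hmaxu
    have hmu : ((mincl W u : Fin n) : ℤ) < (n : ℤ) := by exact_mod_cast (mincl W u).isLt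
    have hmt0 : (0 : ℤ) ≤ ((mincl W t : Fin n) : ℤ) := by positivity
    set lt := ((maxcl W t : Fin n) : ℤ) - ((mincl W t : Fin n) : ℤ)
    set lu := ((maxcl W u : Fin n) : ℤ) - ((mincl W u : Fin n) : ℤ)
    have hll : lt + 1 ≤ lu := by omega
    have : (n : ℤ) * (lt + 1) ≤ (n : ℤ) * lu :=
      mul_le_mul_of_nonneg_left hll (by positivity)
    rw [psi, psi]
    nlinarith

variable (W)

/-- Max of `psi` over the interval `[u, v]`. -/
noncomputable def mx (u v : Fin n) (h : u ≤ v) : ℤ :=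
  (Finset.Icc u v).sup' (Finset.nonempty_Icc.mpr h) (psi W)

lemma psi_le_mx {u v t : Fin n} (h : u ≤ v) (h1 : u ≤ t) (h2 : t ≤ v) :
    psi W t ≤ mx W u v h :=
  Finset.le_sup' _ (Finset.mem_Icc.mpr ⟨h1, h2⟩)

lemma mx_le {u v : Fin n} (h : u ≤ v) {m : ℤ}
    (hm : ∀ t, u ≤ t → t ≤ v → psi W t ≤ m) : mx W u v h ≤ m := by
  apply Finset.sup'_le
  intro t ht
  obtain ⟨h1, h2⟩ := Finset.mem_Icc.mp ht
  exact hm t h1 h2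

lemma mx_self (u : Fin n) : mx W u u le_rfl = psi W u := by
  apply le_antisymm
  · exact mx_le W le_rfl (fun t h1 h2 => le_of_eq (by rw [le_antisymm h2 h1]))
  · exact psi_le_mx W le_rfl le_rfl le_rfl

lemma mx_glue {u v w : Fin n} (h1 : u ≤ v) (h2 : v ≤ w) :
    mx W u w (h1.trans h2) = max (mx W u v h1) (mx W v w h2) := by
  apply le_antisymm
  · apply mx_le
    intro t ht1 ht2
    rcases le_total t v with h | h
    · exact le_trans (psi_le_mx W h1 ht1 h) (le_max_left _ _)
    · exact le_trans (psi_le_mx W h2 h ht2) (le_max_right _ _)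
  · apply max_le
    · exact mx_le W h1 (fun t a b => psi_le_mx W _ a (b.trans h2))
    · exact mx_le W h2 (fun t a b => psi_le_mx W _ (h1.trans a) b)

/-- The detecting functor to `Type`. -/
noncomputable def F : Fin n ⥤ Type where
  obj u := { k : ℤ // psi W u ≤ k }
  map {u v} f := TypeCat.ofHom fun k =>
    ⟨max k.1 (mx W u v (leOfHom f)),
      le_trans (psi_le_mx W (leOfHom f) (leOfHom f) le_rfl) (le_max_right _ _)⟩
  map_id u := by
    ext k
    show max k.1 (mx W u u _) = k.1
    rw [mx_self]
    exact max_eq_left k.2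
  map_comp {u v w} f g := by
    ext k
    show max k.1 (mx W u w _) = max (max k.1 (mx W u v (leOfHom f))) (mx W v w (leOfHom g))
    rw [mx_glue W (leOfHom f) (leOfHom g), max_assoc]

variable {W}

lemma F_inverts (hW : TwoOutOfSix W) : W.IsInvertedBy (F W) := by
  intro u v g hg
  have h : u ≤ v := leOfHom g
  have hrel : Rel W u v := ⟨h, by rwa [Subsingleton.elim (homOfLE h) g]⟩
  have hpsi : psi W v = psi W u := psi_eq hW (Or.inr hrel)
  have hMx : mx W u v h = psi W u :=
    le_antisymm (mx_le W h (fun t a b => nest hW hrel a b)) (psi_le_mx W h le_rfl h)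
  rw [isIso_iff_bijective]
  constructor
  · intro k1 k2 hk
    apply Subtype.ext
    have hval : max k1.1 (mx W u v h) = max k2.1 (mx W u v h) := congrArg Subtype.val hk
    rwa [hMx, max_eq_left k1.2, max_eq_left k2.2] at hval
  · intro k
    refine ⟨⟨k.1, hpsi ▸ k.2⟩, ?_⟩
    apply Subtype.ext
    show max k.1 (mx W u v h) = k.1
    rw [hMx]
    exact max_eq_left (hpsi ▸ k.2)

end Tos

/-- In the thin category of a finite linear order, if `W` satisfies the 2-out-of-6 property
and `f` is sent to an isomorphism by the localization functor `Q ⥤ Q[W⁻¹]`, then `f ∈ W`. -/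
theorem stmt7 (n : ℕ) (W : MorphismProperty (Fin n)) (hW : TwoOutOfSix W)
    {x y : Fin n} (f : x ⟶ y) (hf : IsIso (W.Q.map f)) : W f := by
  open Tos in
  have hF : W.IsInvertedBy (F W) := F_inverts hW
  have hiso : IsIso ((F W).map f) := by
    have e := Localization.Construction.fac (F W) hF
    have h2 : IsIso ((Localization.Construction.lift (F W) hF).map (W.Q.map f)) :=
      inferInstance
    rw [← e]
    exact h2
  rw [isIso_iff_bijective] at hiso
  obtain ⟨inj, surj⟩ := hiso
  have h : x ≤ y := leOfHom f
  have hy : psi W y ≤ mx W x y h := psi_le_mx W h h le_rfl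
  have hx : psi W x ≤ mx W x y h := psi_le_mx W h le_rfl h
  obtain ⟨k, hk⟩ := surj ⟨psi W y, le_refl _⟩
  have h1 : mx W x y h ≤ psi W y := by
    have hval : max k.1 (mx W x y h) = psi W y := congrArg Subtype.val hk
    calc mx W x y h ≤ max k.1 (mx W x y h) := le_max_right _ _
    _ = psi W y := hval
  have hMy : mx W x y h = psi W y := le_antisymm h1 hy
  have h2 : psi W x = mx W x y h := by
    have heq : (F W).map f ⟨psi W x, le_refl _⟩ = (F W).map f ⟨mx W x y h, hx⟩ := by
      apply Subtype.ext
      show max (psi W x) (mx W x y h) = max (mx W x y h) (mx W x y h)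
      rw [max_eq_right hx, max_self]
    exact congrArg Subtype.val (inj heq)
  have hE : ERel W x y := psi_inj hW (by rw [h2, hMy])
  rcases hE with ⟨h', hw⟩ | ⟨h', hw⟩
  · rwa [Subsingleton.elim f (homOfLE h')]
  · have hxy : x = y := le_antisymm h h'
    subst hxy
    rwa [Subsingleton.elim f (homOfLE h')]
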